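/- Let n ≥ k ≥ 1, let X be a random vector in ℝ^k with density proportional to (1 − ‖x‖²)_+^((n−k)/2 − 1), and let a_n be an independent chi-distributed random variable with n degrees of freedom. Then the product a_n · X is distributed as a standard Gaussian vector in ℝ^k (identity covariance). -/

import Mathlib

open MeasureTheory Real Set
open scoped ENNReal

lemma lintegral_image_eq_lintegral_abs_deriv_mul' {s : Set ℝ} {f f' : ℝ → ℝ}
    (hs : MeasurableSet s) (hf' : ∀ x ∈ s, HasDerivWithinAt f (f' x) s x)
    (hf : Set.InjOn f s) (g : ℝ → ℝ≥0∞) :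
    ∫⁻ x in f '' s, g x = ∫⁻ x in s, ENNReal.ofReal |f' x| * g (f x) := by
  simpa only [ContinuousLinearMap.det_toSpanSingleton] using
    lintegral_image_eq_lintegral_abs_det_fderiv_mul volume hs
      (fun x hx => (hf' x hx).hasFDerivWithinAt) hf g

lemma lintegral_inv_Ioo_top : ∫⁻ t in Set.Ioo (0:ℝ) 1, ENNReal.ofReal t⁻¹ = ⊤ := by
  by_contra h
  have hnn : 0 ≤ᶠ[ae (volume.restrict (Set.Ioo (0:ℝ) 1))] fun t => t⁻¹ := by
    filter_upwards [ae_restrict_mem measurableSet_Ioo] with t ht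
    exact inv_nonneg.2 ht.1.le
  have hint : IntegrableOn (fun t : ℝ => t⁻¹) (Set.Ioo (0:ℝ) 1) := by
    refine ⟨measurable_inv.aestronglyMeasurable, ?_⟩
    rw [hasFiniteIntegral_iff_ofReal hnn]
    exact lt_top_iff_ne_top.2 h
  have hint' : IntervalIntegrable (fun t : ℝ => t⁻¹) volume 0 1 := by
    rw [intervalIntegrable_iff_integrableOn_Ioo_of_le zero_le_one]
    exact hint
  rcases intervalIntegrable_inv_iff.1 hint' with h01 | h0
  · norm_num at h01
  · exact h0 (by simp [Set.uIcc_of_le zero_le_one])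

lemma integrable_gauss (k : ℕ) :
    Integrable (fun z : EuclideanSpace ℝ (Fin k) => rexp (-‖z‖ ^ 2 / 2)) := by
  have h := (GaussianFourier.integrable_cexp_neg_mul_sq_norm_add
    (V := EuclideanSpace ℝ (Fin k)) (b := (1/2 : ℂ)) (by norm_num) 0 0).norm
  convert h using 2 with z
  rw [zero_mul, add_zero, Complex.norm_exp]
  congr 1
  have : (-(1/2 : ℂ) * (‖z‖ : ℂ) ^ 2).re = -(1/2) * ‖z‖ ^ 2 := by
    simp [Complex.mul_re, ← Complex.ofReal_pow]
  rw [this]; ring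

lemma lintegral_gauss (k : ℕ) :
    ∫⁻ z : EuclideanSpace ℝ (Fin k), ENNReal.ofReal (Real.exp (-‖z‖ ^ 2 / 2)) =
      ENNReal.ofReal ((2 * π) ^ ((k : ℝ) / 2)) := by
  rw [← ofReal_integral_eq_lintegral_ofReal (integrable_gauss k)
    (Filter.Eventually.of_forall fun z => (Real.exp_pos _).le)]
  congr 1
  have : (fun z : EuclideanSpace ℝ (Fin k) => rexp (-‖z‖ ^ 2 / 2)) =
      fun z : EuclideanSpace ℝ (Fin k) => rexp (-(1/2) * ‖z‖ ^ 2) := by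
    funext z; ring_nf
  rw [this, GaussianFourier.integral_rexp_neg_mul_sq_norm (by norm_num : (0:ℝ) < 1/2),
    finrank_euclideanSpace_fin]
  congr 1
  ring

lemma map_smul_prod_withDensity {k : ℕ} (fa : ℝ → ℝ≥0∞) (fX : EuclideanSpace ℝ (Fin k) → ℝ≥0∞)
    (hfa : Measurable fa) (hfX : Measurable fX) (hfa0 : ∀ a : ℝ, a ≤ 0 → fa a = 0)
    [SFinite (volume.withDensity fX)] :
    ((volume.withDensity fa).prod (volume.withDensity fX)).map
        (fun p : ℝ × EuclideanSpace ℝ (Fin k) => p.1 • p.2) =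
      volume.withDensity (fun z => ∫⁻ a in Ioi (0:ℝ),
        fa a * (ENNReal.ofReal |(a ^ k : ℝ)⁻¹| * fX (a⁻¹ • z))) := by
  have hT : Measurable (fun p : ℝ × EuclideanSpace ℝ (Fin k) => p.1 • p.2) :=
    (continuous_fst.smul continuous_snd).measurable
  have hJ : Measurable fun a : ℝ => ENNReal.ofReal |(a ^ k : ℝ)⁻¹| :=
    (((measurable_id.pow_const k).inv).abs).ennreal_ofReal
  ext s hs
  rw [Measure.map_apply hT hs, Measure.prod_apply (hT hs), withDensity_apply _ hs]
  have hpre : ∀ a : ℝ, MeasurableSet ((fun x : EuclideanSpace ℝ (Fin k) => a • x) ⁻¹' s) :=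
    fun a => (measurable_const_smul a) hs
  have hνrepr : ∀ a : ℝ,
      (volume.withDensity fX) ((fun x : EuclideanSpace ℝ (Fin k) => a • x) ⁻¹' s) =
      ∫⁻ x, s.indicator (fun _ => (1:ℝ≥0∞)) (a • x) ∂(volume.withDensity fX) := by
    intro a
    rw [← lintegral_indicator_one (hpre a)]
    refine lintegral_congr fun x => ?_
    by_cases h : a • x ∈ s
    · rw [Set.indicator_of_mem h, Set.indicator_of_mem (by exact h)]; rfl
    · rw [Set.indicator_of_notMem h, Set.indicator_of_notMem (by exact h)]
  have hνmeas : Measurable fun a : ℝ =>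
      (volume.withDensity fX) ((fun x : EuclideanSpace ℝ (Fin k) => a • x) ⁻¹' s) := by
    simp only [hνrepr]
    apply Measurable.lintegral_prod_right
    exact (measurable_one.indicator hs).comp hT
  have key : ∀ a : ℝ, 0 < a →
      (volume.withDensity fX) ((fun x : EuclideanSpace ℝ (Fin k) => a • x) ⁻¹' s) =
      ∫⁻ z in s, ENNReal.ofReal |(a ^ k : ℝ)⁻¹| * fX (a⁻¹ • z) := by
    intro a ha
    have hmap : Measure.map (fun x : EuclideanSpace ℝ (Fin k) => a • x)
        (volume : Measure (EuclideanSpace ℝ (Fin k))) =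
        ENNReal.ofReal |(a ^ k : ℝ)⁻¹| • (volume : Measure (EuclideanSpace ℝ (Fin k))) := by
      have := Measure.map_addHaar_smul (volume : Measure (EuclideanSpace ℝ (Fin k)))
        (ne_of_gt ha)
      rwa [finrank_euclideanSpace_fin] at this
    rw [withDensity_apply _ (hpre a)]
    calc ∫⁻ x in (fun x : EuclideanSpace ℝ (Fin k) => a • x) ⁻¹' s, fX x
        = ∫⁻ x in (fun x : EuclideanSpace ℝ (Fin k) => a • x) ⁻¹' s,
            (fun z => fX (a⁻¹ • z)) (a • x) := by
          exact lintegral_congr fun x => by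
            simp only [inv_smul_smul₀ (ne_of_gt ha)]
      _ = ∫⁻ z in s, (fun z => fX (a⁻¹ • z)) z
            ∂(Measure.map (fun x : EuclideanSpace ℝ (Fin k) => a • x) volume) :=
          (setLIntegral_map hs (hfX.comp (measurable_const_smul a⁻¹))
            (measurable_const_smul a)).symm
      _ = ENNReal.ofReal |(a ^ k : ℝ)⁻¹| * ∫⁻ z in s, fX (a⁻¹ • z) := by
          rw [hmap]; simp [lintegral_smul_measure]
      _ = ∫⁻ z in s, ENNReal.ofReal |(a ^ k : ℝ)⁻¹| * fX (a⁻¹ • z) :=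
          (lintegral_const_mul (μ := volume.restrict s) (ENNReal.ofReal |(a ^ k : ℝ)⁻¹|)
            (hfX.comp (measurable_const_smul a⁻¹))).symm
  calc ∫⁻ a, (volume.withDensity fX) (Prod.mk a ⁻¹'
          ((fun p : ℝ × EuclideanSpace ℝ (Fin k) => p.1 • p.2) ⁻¹' s)) ∂(volume.withDensity fa)
      = ∫⁻ a, (volume.withDensity fX)
          ((fun x : EuclideanSpace ℝ (Fin k) => a • x) ⁻¹' s) ∂(volume.withDensity fa) := rfl
    _ = ∫⁻ a, fa a * (volume.withDensity fX)
          ((fun x : EuclideanSpace ℝ (Fin k) => a • x) ⁻¹' s) ∂volume := by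
        rw [lintegral_withDensity_eq_lintegral_mul volume hfa hνmeas]
        rfl
    _ = ∫⁻ a, ∫⁻ z in s, fa a * (ENNReal.ofReal |(a ^ k : ℝ)⁻¹| * fX (a⁻¹ • z)) ∂volume := by
        apply lintegral_congr
        intro a
        rcases le_or_gt a 0 with h | h
        · simp [hfa0 a h]
        · rw [key a h]
          exact (lintegral_const_mul (μ := volume.restrict s) (fa a)
            (f := fun z => ENNReal.ofReal |(a ^ k : ℝ)⁻¹| * fX (a⁻¹ • z))
            (measurable_const.mul (hfX.comp (measurable_const_smul a⁻¹)))).symm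
    _ = ∫⁻ z in s, ∫⁻ a, fa a * (ENNReal.ofReal |(a ^ k : ℝ)⁻¹| * fX (a⁻¹ • z)) ∂volume := by
        apply lintegral_lintegral_swap
        apply Measurable.aemeasurable
        apply Measurable.mul
        · exact hfa.comp measurable_fst
        · exact ((hJ.comp measurable_fst).mul
            (hfX.comp ((measurable_fst.inv).smul measurable_snd)))
    _ = ∫⁻ z in s, ∫⁻ a in Ioi (0:ℝ),
          fa a * (ENNReal.ofReal |(a ^ k : ℝ)⁻¹| * fX (a⁻¹ • z)) ∂volume := by
        apply lintegral_congr
        intro z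
        rw [← lintegral_add_compl
          (fun a => fa a * (ENNReal.ofReal |(a ^ k : ℝ)⁻¹| * fX (a⁻¹ • z)))
          measurableSet_Ioi, compl_Ioi]
        have h0 : ∫⁻ a in Iic (0:ℝ),
            fa a * (ENNReal.ofReal |(a ^ k : ℝ)⁻¹| * fX (a⁻¹ • z)) = 0 := by
          rw [← lintegral_zero (μ := volume.restrict (Iic (0:ℝ)))]
          apply setLIntegral_congr_fun measurableSet_Iic
          exact fun a ha => by simp [hfa0 a ha]
        rw [h0, add_zero]

-- the scalar rpow algebra
lemma rpow_algebra {a r : ℝ} (ha : 0 < a) (hr : 0 ≤ r) (n k : ℕ) :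
    a ^ ((n:ℝ) - 1) * Real.exp (-a ^ 2 / 2) * ((a ^ k : ℝ)⁻¹ *
      (max 0 (1 - (a⁻¹ * r) ^ 2)) ^ (((n:ℝ) - k) / 2 - 1)) =
    a * (max 0 (a ^ 2 - r ^ 2)) ^ (((n:ℝ) - k) / 2 - 1) * Real.exp (-a ^ 2 / 2) := by
  have ha2 : (0:ℝ) < a ^ 2 := by positivity
  have h1 : max 0 (1 - (a⁻¹ * r) ^ 2) = max 0 (a ^ 2 - r ^ 2) / a ^ 2 := by
    have hsq : (a⁻¹ * r) ^ 2 = r ^ 2 / a ^ 2 := by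
      field_simp
    rw [eq_div_iff (ne_of_gt ha2)]
    rcases le_total (a ^ 2 - r ^ 2) 0 with h | h
    · rw [max_eq_left h, max_eq_left, zero_mul]
      rw [hsq, sub_nonpos, le_div_iff₀ ha2, one_mul]
      linarith
    · rw [max_eq_right h, max_eq_right]
      · field_simp
      · rw [hsq, sub_nonneg, div_le_one ha2]
        linarith
  set e : ℝ := ((n:ℝ) - k) / 2 - 1 with he
  rw [h1, Real.div_rpow (le_max_left _ _) (le_of_lt ha2)]
  have hscal : a ^ ((n:ℝ) - 1) * ((a ^ k : ℝ)⁻¹ * ((a ^ 2 : ℝ) ^ e)⁻¹) = a := by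
    rw [← Real.rpow_natCast a k, ← Real.rpow_natCast a 2, ← Real.rpow_mul ha.le,
      ← Real.rpow_neg ha.le, ← Real.rpow_neg ha.le, ← Real.rpow_add ha,
      ← Real.rpow_add ha]
    have : (n:ℝ) - 1 + (-(k:ℝ) + -(((2:ℕ):ℝ) * e)) = 1 := by
      rw [he]; push_cast; ring
    rw [this, Real.rpow_one]
  calc a ^ ((n:ℝ) - 1) * Real.exp (-a ^ 2 / 2) *
        ((a ^ k : ℝ)⁻¹ * ((max 0 (a ^ 2 - r ^ 2)) ^ e / (a ^ 2 : ℝ) ^ e))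
      = (a ^ ((n:ℝ) - 1) * ((a ^ k : ℝ)⁻¹ * ((a ^ 2 : ℝ) ^ e)⁻¹)) *
          (max 0 (a ^ 2 - r ^ 2)) ^ e * Real.exp (-a ^ 2 / 2) := by ring
    _ = a * (max 0 (a ^ 2 - r ^ 2)) ^ e * Real.exp (-a ^ 2 / 2) := by rw [hscal]

lemma sq_sub_image (r : ℝ) (hr : 0 ≤ r) :
    (fun a : ℝ => (a ^ 2 - r ^ 2) / 2) '' Ioi r = Ioi 0 := by
  ext t
  constructor
  · rintro ⟨a, ha, rfl⟩
    have : r ^ 2 < a ^ 2 := by nlinarith [mem_Ioi.1 ha]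
    simpa using by linarith
  · intro ht
    refine ⟨Real.sqrt (2 * t + r ^ 2), ?_, ?_⟩
    · rw [mem_Ioi, Real.lt_sqrt hr]
      linarith [mem_Ioi.1 ht]
    · show (Real.sqrt (2 * t + r ^ 2) ^ 2 - r ^ 2) / 2 = t
      rw [Real.sq_sqrt (by nlinarith [mem_Ioi.1 ht] : (0:ℝ) ≤ 2 * t + r ^ 2)]
      ring

lemma sq_sub_injOn (r : ℝ) (hr : 0 ≤ r) :
    Set.InjOn (fun a : ℝ => (a ^ 2 - r ^ 2) / 2) (Ioi r) := by
  intro a ha b hb hab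
  simp only [mem_Ioi] at ha hb
  have h2 : (a ^ 2 - r ^ 2) / 2 = (b ^ 2 - r ^ 2) / 2 := hab
  nlinarith [h2]

lemma sq_sub_hasDeriv (r : ℝ) (a : ℝ) :
    HasDerivAt (fun a : ℝ => (a ^ 2 - r ^ 2) / 2) a a := by
  have h := ((hasDerivAt_pow 2 a).sub_const (r ^ 2)).div_const 2
  exact h.congr_deriv (by norm_num)

-- K_eval
lemma K_eval {e : ℝ} (he : -1 < e) :
    ∫⁻ t in Ioi (0:ℝ), ENNReal.ofReal ((2 * t) ^ e * Real.exp (-t)) =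
      ENNReal.ofReal ((2:ℝ) ^ e * Real.Gamma (e + 1)) := by
  have h1 : ∫⁻ t in Ioi (0:ℝ), ENNReal.ofReal ((2 * t) ^ e * Real.exp (-t)) =
      ∫⁻ t in Ioi (0:ℝ), ENNReal.ofReal ((2:ℝ) ^ e) *
        ENNReal.ofReal (Real.exp (-t) * t ^ ((e + 1) - 1)) := by
    apply setLIntegral_congr_fun measurableSet_Ioi
    intro t ht
    beta_reduce
    rw [← ENNReal.ofReal_mul (by positivity), Real.mul_rpow (by norm_num) (le_of_lt ht)]
    congr 1
    ring_nf
  rw [h1, lintegral_const_mul _ (by fun_prop), ← ofReal_integral_eq_lintegral_ofReal,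
    ← ENNReal.ofReal_mul (by positivity)]
  · congr 1
    rw [← Real.Gamma_eq_integral (by linarith : (0:ℝ) < e + 1)]
  · exact Real.GammaIntegral_convergent (by linarith)
  · filter_upwards [ae_restrict_mem measurableSet_Ioi] with t ht
    have h0 : (0:ℝ) < t := ht
    positivity

-- K_top
lemma K_top :
    ∫⁻ t in Ioi (0:ℝ), ENNReal.ofReal ((2 * t) ^ (-1:ℝ) * Real.exp (-t)) = ⊤ := by
  rw [eq_top_iff]
  calc (⊤:ℝ≥0∞) = ENNReal.ofReal (Real.exp (-1) / 2) *
        ∫⁻ t in Ioo (0:ℝ) 1, ENNReal.ofReal t⁻¹ := by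
        rw [lintegral_inv_Ioo_top, ENNReal.mul_top]
        simp [ENNReal.ofReal_eq_zero, not_le, div_pos (Real.exp_pos _) two_pos]
    _ = ∫⁻ t in Ioo (0:ℝ) 1, ENNReal.ofReal (Real.exp (-1) / 2) * ENNReal.ofReal t⁻¹ :=
        (lintegral_const_mul _ (by fun_prop)).symm
    _ ≤ ∫⁻ t in Ioo (0:ℝ) 1, ENNReal.ofReal ((2 * t) ^ (-1:ℝ) * Real.exp (-t)) := by
        apply setLIntegral_mono (by fun_prop)
        intro t ht
        rw [← ENNReal.ofReal_mul (by positivity)]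
        apply ENNReal.ofReal_le_ofReal
        rw [Real.rpow_neg_one]
        have h1 : Real.exp (-1) ≤ Real.exp (-t) := Real.exp_le_exp.2 (by linarith [ht.2])
        have h2 : (2 * t)⁻¹ = t⁻¹ / 2 := by
          rw [mul_inv]; ring
        rw [h2]
        have ht0 : 0 < t⁻¹ := inv_pos.2 ht.1
        calc Real.exp (-1) / 2 * t⁻¹ = t⁻¹ / 2 * Real.exp (-1) := by ring
          _ ≤ t⁻¹ / 2 * Real.exp (-t) := by
              apply mul_le_mul_of_nonneg_left h1 (by positivity)
    _ ≤ ∫⁻ t in Ioi (0:ℝ), ENNReal.ofReal ((2 * t) ^ (-1:ℝ) * Real.exp (-t)) :=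
        lintegral_mono_set (fun t ht => ht.1)

lemma density_eval {n k : ℕ} (hne : ((n:ℝ) - k) / 2 - 1 ≠ 0) {ca cX : ℝ}
    (hca : 0 ≤ ca) (hcX : 0 ≤ cX) (z : EuclideanSpace ℝ (Fin k)) :
    ∫⁻ a in Ioi (0:ℝ),
      ENNReal.ofReal (ca * if 0 < a then a ^ ((n : ℝ) - 1) * Real.exp (-a ^ 2 / 2) else 0) *
        (ENNReal.ofReal |(a ^ k : ℝ)⁻¹| *
          ENNReal.ofReal (cX * (max 0 (1 - ‖a⁻¹ • z‖ ^ 2)) ^ (((n : ℝ) - k) / 2 - 1))) =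
      ENNReal.ofReal (ca * cX * Real.exp (-‖z‖ ^ 2 / 2)) *
        ∫⁻ t in Ioi (0:ℝ),
          ENNReal.ofReal ((2 * t) ^ (((n : ℝ) - k) / 2 - 1) * Real.exp (-t)) := by
  set e : ℝ := ((n:ℝ) - k) / 2 - 1 with hedef
  set r : ℝ := ‖z‖ with hrdef
  have hr : 0 ≤ r := norm_nonneg z
  have step1 : ∫⁻ a in Ioi (0:ℝ),
      ENNReal.ofReal (ca * if 0 < a then a ^ ((n : ℝ) - 1) * Real.exp (-a ^ 2 / 2) else 0) *
        (ENNReal.ofReal |(a ^ k : ℝ)⁻¹| *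
          ENNReal.ofReal (cX * (max 0 (1 - ‖a⁻¹ • z‖ ^ 2)) ^ e)) =
      ∫⁻ a in Ioi (0:ℝ),
        ENNReal.ofReal (ca * cX * (a * (max 0 (a ^ 2 - r ^ 2)) ^ e * Real.exp (-a ^ 2 / 2))) := by
    apply setLIntegral_congr_fun measurableSet_Ioi
    intro a ha
    beta_reduce
    have ha' : (0:ℝ) < a := ha
    rw [if_pos ha']
    have hnrm : ‖a⁻¹ • z‖ = a⁻¹ * r := by
      rw [norm_smul, Real.norm_eq_abs, abs_of_pos (inv_pos.2 ha'), hrdef]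
    have habs : |(a ^ k : ℝ)⁻¹| = (a ^ k : ℝ)⁻¹ :=
      abs_of_pos (inv_pos.2 (pow_pos ha' k))
    rw [hnrm, habs, ← ENNReal.ofReal_mul (inv_pos.2 (pow_pos ha' k)).le,
      ← ENNReal.ofReal_mul (by positivity)]
    congr 1
    calc ca * (a ^ ((n:ℝ) - 1) * Real.exp (-a ^ 2 / 2)) *
          ((a ^ k : ℝ)⁻¹ * (cX * (max 0 (1 - (a⁻¹ * r) ^ 2)) ^ e))
        = ca * cX * (a ^ ((n:ℝ) - 1) * Real.exp (-a ^ 2 / 2) *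
            ((a ^ k : ℝ)⁻¹ * (max 0 (1 - (a⁻¹ * r) ^ 2)) ^ e)) := by ring
      _ = ca * cX * (a * (max 0 (a ^ 2 - r ^ 2)) ^ e * Real.exp (-a ^ 2 / 2)) := by
          rw [hedef, rpow_algebra ha' hr n k]
  rw [step1]
  have step2 : ∫⁻ a in Ioi (0:ℝ),
      ENNReal.ofReal (ca * cX * (a * (max 0 (a ^ 2 - r ^ 2)) ^ e * Real.exp (-a ^ 2 / 2))) =
      ∫⁻ a in Ioi r,
      ENNReal.ofReal (ca * cX * (a * (max 0 (a ^ 2 - r ^ 2)) ^ e * Real.exp (-a ^ 2 / 2))) := by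
    rw [← Ioc_union_Ioi_eq_Ioi hr, lintegral_union measurableSet_Ioi (Ioc_disjoint_Ioi le_rfl)]
    have hzero : ∫⁻ a in Ioc (0:ℝ) r,
        ENNReal.ofReal (ca * cX * (a * (max 0 (a ^ 2 - r ^ 2)) ^ e * Real.exp (-a ^ 2 / 2)))
        = 0 := by
      rw [← lintegral_zero (μ := volume.restrict (Ioc (0:ℝ) r))]
      apply setLIntegral_congr_fun measurableSet_Ioc
      intro a ha
      beta_reduce
      have h1 : max 0 (a ^ 2 - r ^ 2) = 0 :=
        max_eq_left (by nlinarith [ha.1, ha.2])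
      rw [h1, Real.zero_rpow hne]
      simp
    rw [hzero, zero_add]
  rw [step2]
  have step3 : ∫⁻ a in Ioi r,
      ENNReal.ofReal (ca * cX * (a * (max 0 (a ^ 2 - r ^ 2)) ^ e * Real.exp (-a ^ 2 / 2))) =
      ∫⁻ t in Ioi (0:ℝ),
        ENNReal.ofReal (ca * cX * Real.exp (-r ^ 2 / 2) * ((2 * t) ^ e * Real.exp (-t))) := by
    rw [← sq_sub_image r hr,
      lintegral_image_eq_lintegral_abs_deriv_mul' measurableSet_Ioi
        (fun x _ => (sq_sub_hasDeriv r x).hasDerivWithinAt) (sq_sub_injOn r hr)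
        (fun t => ENNReal.ofReal
          (ca * cX * Real.exp (-r ^ 2 / 2) * ((2 * t) ^ e * Real.exp (-t))))]
    apply setLIntegral_congr_fun measurableSet_Ioi
    intro a ha
    beta_reduce
    have har : r < a := ha
    have ha' : (0:ℝ) < a := lt_of_le_of_lt hr har
    have h1 : max 0 (a ^ 2 - r ^ 2) = a ^ 2 - r ^ 2 :=
      max_eq_right (by nlinarith)
    have h2 : (2 * ((a ^ 2 - r ^ 2) / 2)) = a ^ 2 - r ^ 2 := by ring
    rw [abs_of_pos ha', h2, ← ENNReal.ofReal_mul ha'.le]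
    rw [h1]
    congr 1
    rw [show -(r ^ 2) / 2 = -(r ^ 2 / 2) by ring, show -((a ^ 2 - r ^ 2) / 2) =
      -(a ^ 2 / 2) + r ^ 2 / 2 by ring, Real.exp_add, Real.exp_neg (r ^ 2 / 2),
      show -(a ^ 2) / 2 = -(a ^ 2 / 2) by ring]
    field_simp
  rw [step3]
  have step4 : ∀ t : ℝ,
      ENNReal.ofReal (ca * cX * Real.exp (-r ^ 2 / 2) * ((2 * t) ^ e * Real.exp (-t))) =
      ENNReal.ofReal (ca * cX * Real.exp (-r ^ 2 / 2)) *
        ENNReal.ofReal ((2 * t) ^ e * Real.exp (-t)) := by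
    intro t
    rw [← ENNReal.ofReal_mul (by positivity)]
  simp_rw [step4]
  rw [lintegral_const_mul _ (by fun_prop)]


/-- The standard Gaussian measure on `ℝ^k` (identity covariance), given by its density. -/
noncomputable def stdGaussian (k : ℕ) : Measure (EuclideanSpace ℝ (Fin k)) :=
  volume.withDensity fun z =>
    ENNReal.ofReal ((2 * Real.pi) ^ (-(k : ℝ) / 2) * Real.exp (-‖z‖ ^ 2 / 2))

/-- Measure on `ℝ` with density proportional to the chi density with `n` degrees of
freedom, `t^(n-1) exp(-t²/2)` on `(0,∞)`. -/
noncomputable def chiMeasure (n : ℕ) (c : ℝ) : Measure ℝ :=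
  volume.withDensity fun t =>
    ENNReal.ofReal (c * if 0 < t then t ^ ((n : ℝ) - 1) * Real.exp (-t ^ 2 / 2) else 0)

/-- Measure on `ℝ^k` with density proportional to the Tsallis power-law density
`(1 - ‖x‖²)₊^((n-k)/2 - 1)`. -/
noncomputable def tsallisMeasure (n k : ℕ) (c : ℝ) : Measure (EuclideanSpace ℝ (Fin k)) :=
  volume.withDensity fun x =>
    ENNReal.ofReal (c * (max 0 (1 - ‖x‖ ^ 2)) ^ (((n : ℝ) - k) / 2 - 1))

/-- Theorem 1 of the paper: if `X` is Tsallis distributed and `aₙ` is an independent chi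
random variable with `n` degrees of freedom, then `aₙ • X` is a standard Gaussian vector. -/
theorem chi_mul_tsallis_is_gaussian (n k : ℕ) (hk : 1 ≤ k) (hkn : k ≤ n)
    (ca cX : ℝ) (hca : 0 < ca) (hcX : 0 < cX)
    (ha : IsProbabilityMeasure (chiMeasure n ca))
    (hX : IsProbabilityMeasure (tsallisMeasure n k cX)) :
    ((chiMeasure n ca).prod (tsallisMeasure n k cX)).map
        (fun p : ℝ × EuclideanSpace ℝ (Fin k) => p.1 • p.2) =
      stdGaussian k := by
  haveI : Nonempty (Fin k) := ⟨⟨0, hk⟩⟩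
  haveI : Nontrivial (EuclideanSpace ℝ (Fin k)) := inferInstance
  haveI : NoncompactSpace (EuclideanSpace ℝ (Fin k)) := inferInstance
  -- rule out n = k + 2
  by_cases h2 : (n : ℝ) = (k : ℝ) + 2
  · exfalso
    have he0 : ((n : ℝ) - k) / 2 - 1 = 0 := by rw [h2]; ring
    have huniv : tsallisMeasure n k cX Set.univ = ⊤ := by
      rw [tsallisMeasure, withDensity_apply _ MeasurableSet.univ, Measure.restrict_univ]
      have : ∀ x : EuclideanSpace ℝ (Fin k),
          ENNReal.ofReal (cX * (max 0 (1 - ‖x‖ ^ 2)) ^ (((n : ℝ) - k) / 2 - 1)) =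
          ENNReal.ofReal cX := by
        intro x
        rw [he0, Real.rpow_zero, mul_one]
      simp_rw [this]
      rw [lintegral_const]
      rw [show (volume : Measure (EuclideanSpace ℝ (Fin k))) Set.univ = ⊤ by simp]
      rw [ENNReal.mul_top (by simp [hcX.not_ge, ENNReal.ofReal_eq_zero])]
    rw [hX.measure_univ] at huniv
    exact ENNReal.one_ne_top huniv
  -- set up step A
  haveI hSF : SFinite (volume.withDensity fun x : EuclideanSpace ℝ (Fin k) =>
      ENNReal.ofReal (cX * (max 0 (1 - ‖x‖ ^ 2)) ^ (((n : ℝ) - k) / 2 - 1))) := by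
    haveI := hX
    exact (inferInstance : SFinite (tsallisMeasure n k cX))
  have hfa : Measurable fun t : ℝ =>
      ENNReal.ofReal (ca * if 0 < t then t ^ ((n : ℝ) - 1) * Real.exp (-t ^ 2 / 2) else 0) := by
    apply Measurable.ennreal_ofReal
    apply Measurable.const_mul
    exact Measurable.ite measurableSet_Ioi (by fun_prop) measurable_const
  have hfX : Measurable fun x : EuclideanSpace ℝ (Fin k) =>
      ENNReal.ofReal (cX * (max 0 (1 - ‖x‖ ^ 2)) ^ (((n : ℝ) - k) / 2 - 1)) := by
    apply Measurable.ennreal_ofReal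
    apply Measurable.const_mul
    fun_prop
  have hfa0 : ∀ a : ℝ, a ≤ 0 →
      ENNReal.ofReal (ca * if 0 < a then a ^ ((n : ℝ) - 1) * Real.exp (-a ^ 2 / 2) else 0)
        = 0 := by
    intro a haa
    rw [if_neg (not_lt.2 haa), mul_zero, ENNReal.ofReal_zero]
  have hstepA := map_smul_prod_withDensity
    (fun t : ℝ =>
      ENNReal.ofReal (ca * if 0 < t then t ^ ((n : ℝ) - 1) * Real.exp (-t ^ 2 / 2) else 0))
    (fun x : EuclideanSpace ℝ (Fin k) =>
      ENNReal.ofReal (cX * (max 0 (1 - ‖x‖ ^ 2)) ^ (((n : ℝ) - k) / 2 - 1)))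
    hfa hfX hfa0
  have hprob : IsProbabilityMeasure (((chiMeasure n ca).prod (tsallisMeasure n k cX)).map
      (fun p : ℝ × EuclideanSpace ℝ (Fin k) => p.1 • p.2)) := by
    haveI := ha; haveI := hX
    exact Measure.isProbabilityMeasure_map
      ((continuous_fst.smul continuous_snd).measurable.aemeasurable)
  have hrw : ((chiMeasure n ca).prod (tsallisMeasure n k cX)).map
      (fun p : ℝ × EuclideanSpace ℝ (Fin k) => p.1 • p.2) =
      volume.withDensity fun z => ∫⁻ a in Ioi (0:ℝ),
        (ENNReal.ofReal (ca * if 0 < a then a ^ ((n : ℝ) - 1) * Real.exp (-a ^ 2 / 2) else 0)) *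
          (ENNReal.ofReal |(a ^ k : ℝ)⁻¹| *
            ENNReal.ofReal (cX * (max 0 (1 - ‖a⁻¹ • z‖ ^ 2)) ^ (((n : ℝ) - k) / 2 - 1))) := by
    rw [chiMeasure, tsallisMeasure]
    exact hstepA
  -- exponent facts
  have hne : ((n : ℝ) - k) / 2 - 1 ≠ 0 := by
    intro h
    apply h2
    have : ((n : ℝ) - k) / 2 = 1 := by linarith
    linarith [this, (div_eq_one_iff_eq (two_ne_zero)).1 this]
  by_cases h1 : n = k
  · -- chi exponent -1: infinite density, contradiction
    exfalso
    have he1 : ((n : ℝ) - k) / 2 - 1 = -1 := by rw [h1]; ring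
    have hgtop : ∀ z : EuclideanSpace ℝ (Fin k),
        (∫⁻ a in Ioi (0:ℝ),
          (ENNReal.ofReal (ca * if 0 < a then a ^ ((n : ℝ) - 1) * Real.exp (-a ^ 2 / 2) else 0)) *
            (ENNReal.ofReal |(a ^ k : ℝ)⁻¹| *
              ENNReal.ofReal (cX * (max 0 (1 - ‖a⁻¹ • z‖ ^ 2)) ^ (((n : ℝ) - k) / 2 - 1))))
          = ⊤ := by
      intro z
      rw [density_eval hne hca.le hcX.le z]
      rw [he1, K_top, ENNReal.mul_top]
      simp only [ne_eq, ENNReal.ofReal_eq_zero, not_le]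
      positivity
    have hthis := hprob.measure_univ
    rw [hrw, withDensity_apply _ MeasurableSet.univ, Measure.restrict_univ] at hthis
    simp_rw [hgtop] at hthis
    rw [lintegral_const, show (volume : Measure (EuclideanSpace ℝ (Fin k))) Set.univ = ⊤
      by simp, ENNReal.top_mul_top] at hthis
    exact ENNReal.top_ne_one hthis
  -- main case
  have hkltn : k < n := lt_of_le_of_ne hkn (Ne.symm h1)
  have hegt : (-1:ℝ) < ((n : ℝ) - k) / 2 - 1 := by
    have : (k:ℝ) < n := by exact_mod_cast hkltn
    linarith
  set e : ℝ := ((n : ℝ) - k) / 2 - 1 with hedef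
  set C : ℝ := ca * cX * ((2:ℝ) ^ e * Real.Gamma (e + 1)) with hCdef
  have hC : 0 < C := by
    have := Real.Gamma_pos_of_pos (by linarith : (0:ℝ) < e + 1)
    positivity
  have hg : ∀ z : EuclideanSpace ℝ (Fin k),
      (∫⁻ a in Ioi (0:ℝ),
        (ENNReal.ofReal (ca * if 0 < a then a ^ ((n : ℝ) - 1) * Real.exp (-a ^ 2 / 2) else 0)) *
          (ENNReal.ofReal |(a ^ k : ℝ)⁻¹| *
            ENNReal.ofReal (cX * (max 0 (1 - ‖a⁻¹ • z‖ ^ 2)) ^ e)))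
        = ENNReal.ofReal (C * Real.exp (-‖z‖ ^ 2 / 2)) := by
    intro z
    rw [density_eval hne hca.le hcX.le z, K_eval hegt,
      ← ENNReal.ofReal_mul (by positivity)]
    congr 1
    rw [hCdef]
    ring
  rw [hrw]
  simp_rw [hg]
  -- identify the constant
  have huniv := hprob.measure_univ
  rw [hrw] at huniv
  rw [withDensity_apply _ MeasurableSet.univ, Measure.restrict_univ] at huniv
  simp_rw [hg] at huniv
  have hsplit : ∀ z : EuclideanSpace ℝ (Fin k),
      ENNReal.ofReal (C * Real.exp (-‖z‖ ^ 2 / 2)) =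
      ENNReal.ofReal C * ENNReal.ofReal (Real.exp (-‖z‖ ^ 2 / 2)) := by
    intro z; rw [← ENNReal.ofReal_mul hC.le]
  simp_rw [hsplit] at huniv
  rw [lintegral_const_mul _ (by fun_prop), lintegral_gauss k,
    ← ENNReal.ofReal_mul hC.le, ENNReal.ofReal_eq_one] at huniv
  have hCeq : C = (2 * π) ^ (-(k:ℝ) / 2) := by
    have hpos : (0:ℝ) < (2 * π) ^ ((k:ℝ) / 2) :=
      Real.rpow_pos_of_pos (by positivity) _
    rw [show -(k:ℝ) / 2 = -((k:ℝ) / 2) by ring, Real.rpow_neg (by positivity)]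
    field_simp
    linarith [huniv]
  rw [stdGaussian]
  congr 1
  funext z
  rw [hCeq]
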